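/- For every fixed q ≥ 2 and fixed i with q − 1 ≤ i ≤ n, the function j ↦ max( M(q−1, j−1), R_{ji} ) on {q−1,...,i} is unimodal with a unique minimum value. -/

import Mathlib

/-- Maximum of `f` over a finite set of indices, with the empty maximum being `0`. -/
noncomputable def maxOver (S : Finset ℕ) (f : ℕ → ℝ) : ℝ := S.fold max 0 f

/-- Left evacuation time to sink `x t` of the subpath starting at `x l`, under weights `w`. -/
noncomputable def thetaL (x : ℕ → ℝ) (τ : ℝ) (w : ℕ → ℝ) (l t : ℕ) : ℝ :=
  maxOver (Finset.Ico l t) (fun i => (x t - x i) * τ + ∑ j ∈ Finset.Icc l i, w j)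

/-- Right evacuation time to sink `x t` of the subpath ending at `x r`, under weights `w`. -/
noncomputable def thetaR (x : ℕ → ℝ) (τ : ℝ) (w : ℕ → ℝ) (t r : ℕ) : ℝ :=
  maxOver (Finset.Ioc t r) (fun i => (x i - x t) * τ + ∑ j ∈ Finset.Icc i r, w j)

/-- 1-sink evacuation time `Θ¹([x_l,x_r], x_t, w)`. -/
noncomputable def theta1 (x : ℕ → ℝ) (τ : ℝ) (w : ℕ → ℝ) (l t r : ℕ) : ℝ :=
  max (thetaL x τ w l t) (thetaR x τ w t r)

/-- A scenario assigns each vertex a weight within its bounds. -/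
def IsScenario (n : ℕ) (wlo whi : ℕ → ℝ) (s : ℕ → ℝ) : Prop :=
  ∀ i, i ≤ n → wlo i ≤ s i ∧ s i ≤ whi i

/-- A `k`-partition-with-sinks of the vertex set `{0,…,n}` into `k` consecutive
nonempty blocks `{l p, …, r p}` (`p ∈ {1,…,k}`) with a sink `t p` in each block. -/
structure KPartSinks (n k : ℕ) where
  l : ℕ → ℕ
  r : ℕ → ℕ
  t : ℕ → ℕ
  first : l 1 = 0
  last : r k = n
  consec : ∀ p, 1 ≤ p → p < k → l (p + 1) = r p + 1
  block_nonempty : ∀ p, 1 ≤ p → p ≤ k → l p ≤ r p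
  sink_lb : ∀ p, 1 ≤ p → p ≤ k → l p ≤ t p
  sink_ub : ∀ p, 1 ≤ p → p ≤ k → t p ≤ r p

/-- `k`-sink evacuation time `Θᵏ(P, {P̂,Ŷ}, w)`. -/
noncomputable def thetaK {n k : ℕ} (x : ℕ → ℝ) (τ : ℝ) (PY : KPartSinks n k) (w : ℕ → ℝ) : ℝ :=
  maxOver (Finset.Icc 1 k) (fun p => theta1 x τ w (PY.l p) (PY.t p) (PY.r p))

/-- Optimal `k`-sink evacuation time `Θᵏ_opt(P, w)`. -/
noncomputable def thetaOpt (x : ℕ → ℝ) (τ : ℝ) (n k : ℕ) (w : ℕ → ℝ) : ℝ :=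
  sInf {v : ℝ | ∃ PY : KPartSinks n k, thetaK x τ PY w = v}

/-- Regret `R({P̂,Ŷ}, w)`. -/
noncomputable def regret {n k : ℕ} (x : ℕ → ℝ) (τ : ℝ) (PY : KPartSinks n k) (w : ℕ → ℝ) : ℝ :=
  thetaK x τ PY w - thetaOpt x τ n k w

/-- Max-regret `R_max({P̂,Ŷ})`. -/
noncomputable def maxRegret {n k : ℕ} (x : ℕ → ℝ) (τ : ℝ) (wlo whi : ℕ → ℝ)
    (PY : KPartSinks n k) : ℝ :=
  sSup {v : ℝ | ∃ s : ℕ → ℝ, IsScenario n wlo whi s ∧ regret x τ PY s = v}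

/-- A worst-case scenario: a scenario attaining the max-regret. -/
def IsWorstCase {n k : ℕ} (x : ℕ → ℝ) (τ : ℝ) (wlo whi : ℕ → ℝ) (PY : KPartSinks n k)
    (s : ℕ → ℝ) : Prop :=
  IsScenario n wlo whi s ∧ regret x τ PY s = maxRegret x τ wlo whi PY

/-- `d` is the index of the dominant part of `{P̂,Ŷ}` under weights `w`:
the smallest index attaining `max_p Θ¹(P_p, y_p, w)`. -/
def IsDominant {n k : ℕ} (x : ℕ → ℝ) (τ : ℝ) (PY : KPartSinks n k) (w : ℕ → ℝ) (d : ℕ) : Prop :=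
  1 ≤ d ∧ d ≤ k ∧
  (∀ p, 1 ≤ p → p ≤ k →
    theta1 x τ w (PY.l p) (PY.t p) (PY.r p) ≤ theta1 x τ w (PY.l d) (PY.t d) (PY.r d)) ∧
  (∀ p, 1 ≤ p → p < d →
    theta1 x τ w (PY.l p) (PY.t p) (PY.r p) < theta1 x τ w (PY.l d) (PY.t d) (PY.r d))

/-- `R_{lr}(x_t)`: the max-regret of the subpath `[x_l,x_r]` as assumed dominant
part with sink `x_t`. -/
noncomputable def Rsink (x : ℕ → ℝ) (τ : ℝ) (wlo whi : ℕ → ℝ) (n k : ℕ) (l r t : ℕ) : ℝ :=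
  sSup {v : ℝ | ∃ s : ℕ → ℝ, IsScenario n wlo whi s ∧
    theta1 x τ s l t r - thetaOpt x τ n k s = v}

/-- `R_{lr}`: the minimax regret of the subpath `[x_l,x_r]` as assumed dominant part. -/
noncomputable def Rlr (x : ℕ → ℝ) (τ : ℝ) (wlo whi : ℕ → ℝ) (n k : ℕ) (l r : ℕ) : ℝ :=
  sInf {v : ℝ | ∃ t, l ≤ t ∧ t ≤ r ∧ Rsink x τ wlo whi n k l r t = v}

/-- A partition of `{0,…,i}` into `q` consecutive nonempty blocks `{l p, …, r p}`. -/
def IsQPartition (q i : ℕ) (l r : ℕ → ℕ) : Prop :=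
  l 1 = 0 ∧ r q = i ∧ (∀ p, 1 ≤ p → p < q → l (p + 1) = r p + 1) ∧
  (∀ p, 1 ≤ p → p ≤ q → l p ≤ r p)

/-- `M(q, i)`: the minimum over partitions of `{0,…,i}` into `q` consecutive
nonempty blocks of `max_p R_{l_p r_p}`. -/
noncomputable def Mreg (x : ℕ → ℝ) (τ : ℝ) (wlo whi : ℕ → ℝ) (n k : ℕ) (q i : ℕ) : ℝ :=
  sInf {v : ℝ | ∃ lf rf : ℕ → ℕ, IsQPartition q i lf rf ∧
    maxOver (Finset.Icc 1 q) (fun p => Rlr x τ wlo whi n k (lf p) (rf p)) = v}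

/-- Left-dominant scenario on `{l,…,r}`. -/
def LeftDominant (wlo whi s : ℕ → ℝ) (l r : ℕ) : Prop :=
  ∃ i, l ≤ i ∧ i ≤ r + 1 ∧ (∀ j, l ≤ j → j < i → s j = whi j) ∧
    (∀ j, i ≤ j → j ≤ r → s j = wlo j)

/-- Right-dominant scenario on `{l,…,r}`. -/
def RightDominant (wlo whi s : ℕ → ℝ) (l r : ℕ) : Prop :=
  ∃ i, l ≤ i ∧ i ≤ r + 1 ∧ (∀ j, l ≤ j → j < i → s j = wlo j) ∧
    (∀ j, i ≤ j → j ≤ r → s j = whi j)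

namespace Stmt14

lemma maxOver_nonneg (S : Finset ℕ) (f : ℕ → ℝ) : 0 ≤ maxOver S f :=
  (Finset.le_fold_max _).mpr (Or.inl le_rfl)

lemma le_maxOver {S : Finset ℕ} {f : ℕ → ℝ} {a : ℕ} (ha : a ∈ S) : f a ≤ maxOver S f :=
  (Finset.le_fold_max _).mpr (Or.inr ⟨a, ha, le_rfl⟩)

lemma maxOver_le {S : Finset ℕ} {f : ℕ → ℝ} {b : ℝ} (hb : 0 ≤ b) (h : ∀ a ∈ S, f a ≤ b) :
    maxOver S f ≤ b :=
  (Finset.fold_max_le b).mpr ⟨hb, h⟩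

lemma maxOver_le_maxOver {S T : Finset ℕ} {f g : ℕ → ℝ} (h : ∀ a ∈ S, ∃ b ∈ T, f a ≤ g b) :
    maxOver S f ≤ maxOver T g :=
  maxOver_le (maxOver_nonneg T g) fun a ha => by
    obtain ⟨b, hb, hfg⟩ := h a ha
    exact hfg.trans (le_maxOver hb)

lemma x_mono {n : ℕ} {x : ℕ → ℝ} (hx : ∀ i, i < n → x i < x (i + 1)) {a b : ℕ}
    (hab : a ≤ b) (hb : b ≤ n) : x a ≤ x b := by
  induction b, hab using Nat.le_induction with
  | base => exact le_rfl
  | succ m hm ih => exact (ih (by omega)).trans (hx m (by omega)).le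

section
variable {n k : ℕ} {x : ℕ → ℝ} {τ : ℝ} {wlo whi s s' : ℕ → ℝ} {l l' t t' r r' : ℕ}

lemma theta1_nonneg : 0 ≤ theta1 x τ s l t r :=
  (maxOver_nonneg _ _).trans (le_max_left _ _)

lemma thetaL_mono_l (hs : ∀ j, j ≤ n → 0 ≤ s j) (htn : t ≤ n) (hl : l ≤ l') :
    thetaL x τ s l' t ≤ thetaL x τ s l t := by
  apply maxOver_le_maxOver
  intro a ha
  rw [Finset.mem_Ico] at ha
  refine ⟨a, Finset.mem_Ico.mpr ⟨hl.trans ha.1, ha.2⟩, ?_⟩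
  apply add_le_add_right
  apply Finset.sum_le_sum_of_subset_of_nonneg
  · exact Finset.Icc_subset_Icc_left hl
  · intro j hj _
    rw [Finset.mem_Icc] at hj
    exact hs j (by omega)

lemma thetaL_mono_sink (hx : ∀ i, i < n → x i < x (i + 1)) (hτ : 0 ≤ τ) (ht'n : t' ≤ n)
    (ht : t ≤ t') : thetaL x τ s l t ≤ thetaL x τ s l t' := by
  apply maxOver_le_maxOver
  intro a ha
  rw [Finset.mem_Ico] at ha
  refine ⟨a, Finset.mem_Ico.mpr ⟨ha.1, by omega⟩, ?_⟩
  have := x_mono hx ht ht'n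
  apply add_le_add_left
  apply mul_le_mul_of_nonneg_right _ hτ
  linarith

lemma thetaL_mono_scen (hss : ∀ j, j ≤ n → s j ≤ s' j) (htn : t ≤ n) :
    thetaL x τ s l t ≤ thetaL x τ s' l t := by
  apply maxOver_le_maxOver
  intro a ha
  rw [Finset.mem_Ico] at ha
  refine ⟨a, Finset.mem_Ico.mpr ha, add_le_add_right ?_ _⟩
  apply Finset.sum_le_sum
  intro j hj
  rw [Finset.mem_Icc] at hj
  exact hss j (by omega)

lemma thetaR_mono_r (hs : ∀ j, j ≤ n → 0 ≤ s j) (hr : r ≤ r') (hr'n : r' ≤ n) :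
    thetaR x τ s t r ≤ thetaR x τ s t r' := by
  apply maxOver_le_maxOver
  intro a ha
  rw [Finset.mem_Ioc] at ha
  refine ⟨a, Finset.mem_Ioc.mpr ⟨ha.1, ha.2.trans hr⟩, add_le_add_right ?_ _⟩
  apply Finset.sum_le_sum_of_subset_of_nonneg
  · exact Finset.Icc_subset_Icc_right hr
  · intro j hj _
    rw [Finset.mem_Icc] at hj
    exact hs j (by omega)

lemma thetaR_anti_sink (hx : ∀ i, i < n → x i < x (i + 1)) (hτ : 0 ≤ τ) (ht'n : t' ≤ n)
    (ht : t ≤ t') : thetaR x τ s t' r ≤ thetaR x τ s t r := by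
  apply maxOver_le_maxOver
  intro a ha
  rw [Finset.mem_Ioc] at ha
  refine ⟨a, Finset.mem_Ioc.mpr ⟨by omega, ha.2⟩, add_le_add_left ?_ _⟩
  have := x_mono hx ht ht'n
  apply mul_le_mul_of_nonneg_right _ hτ
  linarith

lemma thetaR_mono_scen (hss : ∀ j, j ≤ n → s j ≤ s' j) (hrn : r ≤ n) :
    thetaR x τ s t r ≤ thetaR x τ s' t r := by
  apply maxOver_le_maxOver
  intro a ha
  rw [Finset.mem_Ioc] at ha
  refine ⟨a, Finset.mem_Ioc.mpr ha, add_le_add_right ?_ _⟩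
  apply Finset.sum_le_sum
  intro j hj
  rw [Finset.mem_Icc] at hj
  exact hss j (by omega)

lemma theta1_mono_scen (hss : ∀ j, j ≤ n → s j ≤ s' j) (htn : t ≤ n) (hrn : r ≤ n) :
    theta1 x τ s l t r ≤ theta1 x τ s' l t r :=
  max_le_max (thetaL_mono_scen hss htn) (thetaR_mono_scen hss hrn)

end

section
variable {n k : ℕ} {x : ℕ → ℝ} {τ : ℝ} {wlo whi s s' : ℕ → ℝ} {l l' t t' r r' : ℕ}

lemma scenario_wlo (hw : ∀ i, i ≤ n → 0 < wlo i ∧ wlo i ≤ whi i) : IsScenario n wlo whi wlo :=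
  fun i hi => ⟨le_rfl, (hw i hi).2⟩

lemma scenario_nonneg (hw : ∀ i, i ≤ n → 0 < wlo i ∧ wlo i ≤ whi i)
    (hs : IsScenario n wlo whi s) : ∀ j, j ≤ n → 0 ≤ s j :=
  fun j hj => ((hw j hj).1.le).trans (hs j hj).1

lemma thetaOpt_nonneg : 0 ≤ thetaOpt x τ n k s := by
  apply Real.sInf_nonneg
  rintro v ⟨PY, rfl⟩
  exact maxOver_nonneg _ _

lemma Rsink_bddAbove (hw : ∀ i, i ≤ n → 0 < wlo i ∧ wlo i ≤ whi i) (htn : t ≤ n) (hrn : r ≤ n) :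
    BddAbove {v : ℝ | ∃ s : ℕ → ℝ, IsScenario n wlo whi s ∧
      theta1 x τ s l t r - thetaOpt x τ n k s = v} := by
  refine ⟨theta1 x τ whi l t r, ?_⟩
  rintro v ⟨s, hs, rfl⟩
  have h1 : theta1 x τ s l t r ≤ theta1 x τ whi l t r :=
    theta1_mono_scen (fun j hj => (hs j hj).2) htn hrn
  have h2 : (0:ℝ) ≤ thetaOpt x τ n k s := thetaOpt_nonneg
  linarith

lemma Rsink_mono (hw : ∀ i, i ≤ n → 0 < wlo i ∧ wlo i ≤ whi i)
    (h : ∀ s : ℕ → ℝ, IsScenario n wlo whi s → theta1 x τ s l' t' r' ≤ theta1 x τ s l t r)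
    (htn : t ≤ n) (hrn : r ≤ n) :
    Rsink x τ wlo whi n k l' r' t' ≤ Rsink x τ wlo whi n k l r t := by
  unfold Rsink
  refine csSup_le ?_ ?_
  · exact ⟨_, wlo, scenario_wlo hw, rfl⟩
  rintro v ⟨s, hs, rfl⟩
  have hmem : theta1 x τ s l t r - thetaOpt x τ n k s ∈ {v : ℝ | ∃ s : ℕ → ℝ,
      IsScenario n wlo whi s ∧ theta1 x τ s l t r - thetaOpt x τ n k s = v} := ⟨s, hs, rfl⟩
  have := le_csSup (Rsink_bddAbove hw htn hrn) hmem
  have := h s hs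
  linarith

lemma Rsink_lb (hw : ∀ i, i ≤ n → 0 < wlo i ∧ wlo i ≤ whi i) (hlt : l ≤ t) (htr : t ≤ r)
    (hrn : r ≤ n) : -(thetaOpt x τ n k wlo) ≤ Rsink x τ wlo whi n k l r t := by
  have hmem : theta1 x τ wlo l t r - thetaOpt x τ n k wlo ∈ {v : ℝ | ∃ s : ℕ → ℝ,
      IsScenario n wlo whi s ∧ theta1 x τ s l t r - thetaOpt x τ n k s = v} :=
    ⟨wlo, scenario_wlo hw, rfl⟩
  have h1 := le_csSup (Rsink_bddAbove (l := l) (t := t) (r := r) hw (htr.trans hrn) hrn) hmem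
  have h2 : (0:ℝ) ≤ theta1 x τ wlo l t r := theta1_nonneg
  unfold Rsink
  linarith

lemma theta1_contain (hx : ∀ i, i < n → x i < x (i + 1)) (hτ : 0 ≤ τ)
    (hs0 : ∀ j, j ≤ n → 0 ≤ s j)
    (hl : l ≤ l') (hl'r' : l' ≤ r') (hr : r' ≤ r) (hrn : r ≤ n) (hlt : l ≤ t) (htr : t ≤ r) :
    theta1 x τ s l' (max l' (min t r')) r' ≤ theta1 x τ s l t r := by
  rcases lt_or_ge t l' with hcase1 | hge
  · -- t < l' : clamp = l'
    have hclamp : max l' (min t r') = l' := by omega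
    rw [hclamp]
    have hL : thetaL x τ s l' l' = 0 := by
      simp [thetaL, maxOver]
    apply max_le
    · rw [hL]; exact theta1_nonneg
    · calc thetaR x τ s l' r' ≤ thetaR x τ s l' r := thetaR_mono_r hs0 hr hrn
        _ ≤ thetaR x τ s t r := thetaR_anti_sink hx hτ (by omega) (by omega)
        _ ≤ theta1 x τ s l t r := le_max_right _ _
  · rcases lt_or_ge r' t with hcase2 | hle2
    · -- r' < t : clamp = r'
      have hclamp : max l' (min t r') = r' := by omega
      rw [hclamp]
      have hR : thetaR x τ s r' r' = 0 := by
        simp [thetaR, maxOver]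
      apply max_le
      · calc thetaL x τ s l' r' ≤ thetaL x τ s l r' := thetaL_mono_l hs0 (by omega) hl
          _ ≤ thetaL x τ s l t := thetaL_mono_sink hx hτ (by omega) (by omega)
          _ ≤ theta1 x τ s l t r := le_max_left _ _
      · rw [hR]; exact theta1_nonneg
    · -- l' ≤ t ≤ r' : clamp = t
      have hclamp : max l' (min t r') = t := by omega
      rw [hclamp]
      exact max_le_max (thetaL_mono_l hs0 (by omega) hl) (thetaR_mono_r hs0 hr hrn)

lemma Rlr_mono (hw : ∀ i, i ≤ n → 0 < wlo i ∧ wlo i ≤ whi i)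
    (hx : ∀ i, i < n → x i < x (i + 1)) (hτ : 0 ≤ τ)
    (hl : l ≤ l') (hl'r' : l' ≤ r') (hr : r' ≤ r) (hrn : r ≤ n) :
    Rlr x τ wlo whi n k l' r' ≤ Rlr x τ wlo whi n k l r := by
  unfold Rlr
  have hbdd : BddBelow {v : ℝ | ∃ t, l' ≤ t ∧ t ≤ r' ∧ Rsink x τ wlo whi n k l' r' t = v} := by
    refine ⟨-(thetaOpt x τ n k wlo), ?_⟩
    rintro v ⟨t, h1, h2, rfl⟩
    exact Rsink_lb hw h1 h2 (hr.trans hrn)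
  refine le_csInf ?_ ?_
  · exact ⟨_, l, le_rfl, by omega, rfl⟩
  rintro v ⟨t, hlt, htr, rfl⟩
  have ht''1 : l' ≤ max l' (min t r') := le_max_left _ _
  have ht''2 : max l' (min t r') ≤ r' := by omega
  have hle : Rsink x τ wlo whi n k l' r' (max l' (min t r')) ≤ Rsink x τ wlo whi n k l r t :=
    Rsink_mono hw
      (fun s hs => theta1_contain hx hτ (scenario_nonneg hw hs) hl hl'r' hr hrn hlt htr)
      (by omega) hrn
  refine le_trans (csInf_le hbdd ⟨_, ht''1, ht''2, rfl⟩) hle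

end
end Stmt14
namespace Stmt14
section
variable {n k : ℕ} {x : ℕ → ℝ} {τ : ℝ} {wlo whi : ℕ → ℝ}

lemma qpart_rf_mono {q i : ℕ} {lf rf : ℕ → ℕ} (h : IsQPartition q i lf rf)
    {p m : ℕ} (h1 : 1 ≤ p) (hpm : p ≤ m) (hmq : m ≤ q) : rf p ≤ rf m := by
  obtain ⟨hl1, hrq, hcons, hne⟩ := h
  induction m, hpm using Nat.le_induction with
  | base => exact le_rfl
  | succ m hm ih =>
      have hmq' : m < q := by omega
      calc rf p ≤ rf m := ih (by omega)
        _ ≤ lf (m + 1) := by rw [hcons m (by omega) hmq']; omega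
        _ ≤ rf (m + 1) := hne (m + 1) (by omega) hmq

lemma qpart_rf_le {q i : ℕ} {lf rf : ℕ → ℕ} (h : IsQPartition q i lf rf)
    {p : ℕ} (h1 : 1 ≤ p) (h2 : p ≤ q) : rf p ≤ i := by
  have h3 := qpart_rf_mono h h1 h2 le_rfl
  have h4 := h.2.1
  omega

lemma Mreg_bddBelow (q' i' : ℕ) :
    BddBelow {v : ℝ | ∃ lf rf : ℕ → ℕ, IsQPartition q' i' lf rf ∧
      maxOver (Finset.Icc 1 q') (fun p => Rlr x τ wlo whi n k (lf p) (rf p)) = v} := by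
  refine ⟨0, ?_⟩
  rintro v ⟨lf, rf, _, rfl⟩
  exact maxOver_nonneg _ _

lemma qpart_exists (q' i' : ℕ) (hq : 1 ≤ q') (hi : q' - 1 ≤ i') :
    ∃ lf rf : ℕ → ℕ, IsQPartition q' i' lf rf := by
  refine ⟨fun p => p - 1, fun p => if p = q' then i' else p - 1, ?_, ?_, ?_, ?_⟩
  · rfl
  · simp
  · intro p h1 h2
    simp only [if_neg (show ¬ p = q' by omega)]
    omega
  · intro p h1 h2
    by_cases hp : p = q' <;> simp [hp] <;> omega

end
end Stmt14
namespace Stmt14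
section
variable {n k : ℕ} {x : ℕ → ℝ} {τ : ℝ} {wlo whi : ℕ → ℝ}

lemma Mreg_step (hw : ∀ i, i ≤ n → 0 < wlo i ∧ wlo i ≤ whi i)
    (hx : ∀ i, i < n → x i < x (i + 1)) (hτ : 0 ≤ τ)
    {q' i' : ℕ} (hq' : 1 ≤ q') (hi' : q' - 1 ≤ i') (hn : i' + 1 ≤ n) :
    Mreg x τ wlo whi n k q' i' ≤ Mreg x τ wlo whi n k q' (i' + 1) := by
  unfold Mreg
  refine le_csInf ?_ ?_
  · obtain ⟨lf, rf, hp⟩ := qpart_exists q' (i' + 1) hq' (by omega)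
    exact ⟨_, lf, rf, hp, rfl⟩
  rintro v ⟨lf, rf, hpart, rfl⟩
  have hv0 : (0:ℝ) ≤ maxOver (Finset.Icc 1 q') (fun p => Rlr x τ wlo whi n k (lf p) (rf p)) :=
    maxOver_nonneg _ _
  obtain ⟨hl1, hrq, hcons, hne⟩ := hpart
  have hrfle : ∀ p, 1 ≤ p → p ≤ q' → rf p ≤ i' + 1 := fun p h1 h2 =>
    qpart_rf_le ⟨hl1, hrq, hcons, hne⟩ h1 h2
  by_cases hcase : lf q' ≤ i'
  · -- shrink last block
    have hpart' : IsQPartition q' i' lf (fun p => if p = q' then i' else rf p) := by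
      refine ⟨hl1, by simp, ?_, ?_⟩
      · intro p h1 h2
        simp only [if_neg (show ¬ p = q' by omega)]
        exact hcons p h1 h2
      · intro p h1 h2
        by_cases hp : p = q'
        · subst hp; simp only [if_pos rfl]; exact hcase
        · simp only [if_neg hp]; exact hne p h1 h2
    refine le_trans (csInf_le (Mreg_bddBelow q' i') ⟨_, _, hpart', rfl⟩) ?_
    refine maxOver_le hv0 ?_
    intro p hp
    rw [Finset.mem_Icc] at hp
    have key : ∀ p', 1 ≤ p' → p' ≤ q' → Rlr x τ wlo whi n k (lf p') (rf p') ≤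
        maxOver (Finset.Icc 1 q') (fun p => Rlr x τ wlo whi n k (lf p) (rf p)) := by
      intro p' h1 h2
      exact le_maxOver (f := fun p => Rlr x τ wlo whi n k (lf p) (rf p))
        (Finset.mem_Icc.mpr ⟨h1, h2⟩)
    show Rlr x τ wlo whi n k (lf p) (if p = q' then i' else rf p) ≤ _
    by_cases hpq : p = q'
    · rw [if_pos hpq, hpq]
      refine le_trans ?_ (key q' hq' le_rfl)
      rw [hrq]
      exact Rlr_mono hw hx hτ le_rfl hcase (by omega) hn
    · rw [if_neg hpq]
      exact key p hp.1 hp.2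
  · -- lf q' = i' + 1 : drop last block and split some earlier block
    have hq'2 : 2 ≤ q' := by
      rcases Nat.lt_or_ge q' 2 with h | h
      · exfalso
        have hq1 : q' = 1 := by omega
        subst hq1
        omega
      · exact h
    have hlfq : lf q' = i' + 1 := by
      have := hne q' hq' le_rfl
      omega
    have hrfq1 : rf (q' - 1) = i' := by
      have := hcons (q' - 1) (by omega) (by omega)
      rw [show q' - 1 + 1 = q' by omega] at this
      omega
    -- find a splittable block among 1..q'-1
    have hsplit : ∃ p, 1 ≤ p ∧ p ≤ q' - 1 ∧ lf p < rf p := by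
      by_contra hcon
      push_neg at hcon
      have hsing : ∀ p, 1 ≤ p → p ≤ q' - 1 → rf p = p - 1 := by
        intro p
        induction p with
        | zero => intro h1 _; omega
        | succ m ih =>
          intro _ h2
          by_cases hm : m = 0
          · subst hm
            have hle := hne 1 le_rfl (by omega)
            have hge := hcon 1 le_rfl h2
            show rf 1 = 1 - 1
            omega
          · have ihm := ih (by omega) (by omega)
            have hc := hcons m (by omega) (by omega)
            have hle := hne (m + 1) (by omega) (by omega)
            have hge := hcon (m + 1) (by omega) h2
            omega
      have := hsing (q' - 1) (by omega) le_rfl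
      omega
    obtain ⟨ps, hps1, hps2, hps3⟩ := hsplit
    have hps3' : 1 ≤ rf ps := by omega
    -- the split partition
    set L := fun p => if p ≤ ps then lf p else if p = ps + 1 then rf ps else lf (p - 1)
      with hL
    set R := fun p => if p < ps then rf p else if p = ps then rf ps - 1 else rf (p - 1)
      with hR
    have eL1 : ∀ p, p ≤ ps → L p = lf p := by
      intro p h; simp only [hL]; rw [if_pos h]
    have eL2 : L (ps + 1) = rf ps := by
      simp only [hL]
      rw [if_neg (show ¬ ps + 1 ≤ ps by omega)]
      simp
    have eL3 : ∀ p, ps + 1 < p → L p = lf (p - 1) := by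
      intro p h; simp only [hL]; rw [if_neg (by omega), if_neg (by omega)]
    have eR1 : ∀ p, p < ps → R p = rf p := by
      intro p h; simp only [hR]; rw [if_pos h]
    have eR2 : R ps = rf ps - 1 := by
      simp only [hR]
      rw [if_neg (show ¬ ps < ps by omega)]
      simp
    have eR3 : ∀ p, ps < p → R p = rf (p - 1) := by
      intro p h; simp only [hR]; rw [if_neg (by omega), if_neg (by omega)]
    have hpart' : IsQPartition q' i' L R := by
      refine ⟨?_, ?_, ?_, ?_⟩
      · rw [eL1 1 hps1]; exact hl1
      · rw [eR3 q' (by omega)]; exact hrfq1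
      · intro p h1 h2
        rcases Nat.lt_or_ge p ps with hlt | hge
        · rw [eL1 (p + 1) (by omega), eR1 p hlt]
          exact hcons p h1 (by omega)
        · rcases Nat.eq_or_lt_of_le hge with heq | hgt
          · subst heq
            rw [eL2, eR2]
            omega
          · rcases Nat.eq_or_lt_of_le hgt with heq2 | hgt2
            · subst heq2
              rw [eR3 (ps + 1) (by omega), eL3 (ps + 1 + 1) (by omega)]
              simp only [Nat.add_sub_cancel]
              exact hcons ps hps1 (by omega)
            · rw [eL3 (p + 1) (by omega), eR3 p (by omega)]
              simp only [Nat.add_sub_cancel]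
              have := hcons (p - 1) (by omega) (by omega)
              rw [show p - 1 + 1 = p by omega] at this
              exact this
      · intro p h1 h2
        rcases Nat.lt_or_ge p ps with hlt | hge
        · rw [eL1 p (by omega), eR1 p hlt]
          exact hne p h1 (by omega)
        · rcases Nat.eq_or_lt_of_le hge with heq | hgt
          · subst heq
            rw [eL1 ps le_rfl, eR2]
            omega
          · rcases Nat.eq_or_lt_of_le hgt with heq2 | hgt2
            · subst heq2
              rw [eL2, eR3 (ps + 1) (by omega)]
              simp only [Nat.add_sub_cancel]
              exact le_rfl
            · rw [eL3 p (by omega), eR3 p (by omega)]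
              exact hne (p - 1) (by omega) (by omega)
    refine le_trans (csInf_le (Mreg_bddBelow q' i') ⟨L, R, hpart', rfl⟩) ?_
    refine maxOver_le hv0 ?_
    intro p hp
    rw [Finset.mem_Icc] at hp
    have hRps : rf ps ≤ n := le_trans (hrfle ps hps1 (by omega)) hn
    have key : ∀ p', 1 ≤ p' → p' ≤ q' → Rlr x τ wlo whi n k (lf p') (rf p') ≤
        maxOver (Finset.Icc 1 q') (fun p => Rlr x τ wlo whi n k (lf p) (rf p)) := by
      intro p' h1 h2
      exact le_maxOver (f := fun p => Rlr x τ wlo whi n k (lf p) (rf p))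
        (Finset.mem_Icc.mpr ⟨h1, h2⟩)
    show Rlr x τ wlo whi n k (L p) (R p) ≤ _
    rcases Nat.lt_or_ge p ps with hlt | hge
    · rw [eL1 p (by omega), eR1 p hlt]
      exact key p hp.1 (by omega)
    · rcases Nat.eq_or_lt_of_le hge with heq | hgt
      · subst heq
        rw [eL1 ps le_rfl, eR2]
        refine le_trans ?_ (key ps hps1 (by omega))
        exact Rlr_mono hw hx hτ le_rfl (by omega) (by omega) hRps
      · rcases Nat.eq_or_lt_of_le hgt with heq2 | hgt2
        · subst heq2
          rw [eL2, eR3 (ps + 1) (by omega)]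
          simp only [Nat.add_sub_cancel]
          refine le_trans ?_ (key ps hps1 (by omega))
          exact Rlr_mono hw hx hτ (by omega) le_rfl le_rfl hRps
        · rw [eL3 p (by omega), eR3 p (by omega)]
          exact key (p - 1) (by omega) (by omega)

lemma Mreg_mono (hw : ∀ i, i ≤ n → 0 < wlo i ∧ wlo i ≤ whi i)
    (hx : ∀ i, i < n → x i < x (i + 1)) (hτ : 0 ≤ τ)
    {q' i1 i2 : ℕ} (hq' : 1 ≤ q') (h1 : q' - 1 ≤ i1) (h12 : i1 ≤ i2) (h2 : i2 ≤ n) :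
    Mreg x τ wlo whi n k q' i1 ≤ Mreg x τ wlo whi n k q' i2 := by
  induction i2, h12 using Nat.le_induction with
  | base => exact le_rfl
  | succ m hm ih =>
      exact (ih (by omega)).trans (Mreg_step hw hx hτ hq' (by omega) h2)

end
end Stmt14

/-- for fixed `q ≥ 2` and `i`, the function
`j ↦ max(M(q−1, j−1), R_{ji})` is unimodal with a unique minimum value on
`{q−1, …, i}`. -/
theorem stmt_14 (n k : ℕ) (x : ℕ → ℝ) (τ : ℝ) (wlo whi : ℕ → ℝ)
    (hx : ∀ i, i < n → x i < x (i + 1)) (hτ : 0 < τ)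
    (hw : ∀ i, i ≤ n → 0 < wlo i ∧ wlo i ≤ whi i) (hk : 1 ≤ k)
    (q i : ℕ) (hq : 2 ≤ q) (hi1 : q - 1 ≤ i) (hi2 : i ≤ n) :
    ∃ m, q - 1 ≤ m ∧ m ≤ i ∧
      (∀ a a', q - 1 ≤ a → a ≤ a' → a' ≤ m →
        max (Mreg x τ wlo whi n k (q - 1) (a' - 1)) (Rlr x τ wlo whi n k a' i) ≤
        max (Mreg x τ wlo whi n k (q - 1) (a - 1)) (Rlr x τ wlo whi n k a i)) ∧
      (∀ a a', m ≤ a → a ≤ a' → a' ≤ i →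
        max (Mreg x τ wlo whi n k (q - 1) (a - 1)) (Rlr x τ wlo whi n k a i) ≤
        max (Mreg x τ wlo whi n k (q - 1) (a' - 1)) (Rlr x τ wlo whi n k a' i)) := by
  classical
  have hne : (Finset.Icc (q - 1) i).Nonempty := ⟨q - 1, Finset.mem_Icc.mpr ⟨le_rfl, hi1⟩⟩
  obtain ⟨m, hmmem, hmin⟩ := Finset.exists_min_image (Finset.Icc (q - 1) i)
    (fun j => max (Mreg x τ wlo whi n k (q - 1) (j - 1)) (Rlr x τ wlo whi n k j i)) hne
  rw [Finset.mem_Icc] at hmmem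
  have hq1 : 1 ≤ q - 1 := by omega
  have hMmono : ∀ a a', q - 1 ≤ a → a ≤ a' → a' ≤ i →
      Mreg x τ wlo whi n k (q - 1) (a - 1) ≤ Mreg x τ wlo whi n k (q - 1) (a' - 1) := by
    intro a a' h1 h2 h3
    exact Stmt14.Mreg_mono hw hx hτ.le hq1 (by omega) (by omega) (by omega)
  have hRmono : ∀ a a', q - 1 ≤ a → a ≤ a' → a' ≤ i →
      Rlr x τ wlo whi n k a' i ≤ Rlr x τ wlo whi n k a i := by
    intro a a' h1 h2 h3
    exact Stmt14.Rlr_mono hw hx hτ.le h2 h3 le_rfl hi2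
  refine ⟨m, hmmem.1, hmmem.2, ?_, ?_⟩
  · intro a a' ha haa' ha'm
    have hgm : max (Mreg x τ wlo whi n k (q - 1) (m - 1)) (Rlr x τ wlo whi n k m i) ≤
        max (Mreg x τ wlo whi n k (q - 1) (a - 1)) (Rlr x τ wlo whi n k a i) :=
      hmin a (Finset.mem_Icc.mpr ⟨ha, by omega⟩)
    apply max_le
    · calc Mreg x τ wlo whi n k (q - 1) (a' - 1)
          ≤ Mreg x τ wlo whi n k (q - 1) (m - 1) := hMmono a' m (by omega) ha'm (by omega)
        _ ≤ max (Mreg x τ wlo whi n k (q - 1) (m - 1)) (Rlr x τ wlo whi n k m i) :=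
            le_max_left _ _
        _ ≤ _ := hgm
    · exact (hRmono a a' ha haa' (by omega)).trans (le_max_right _ _)
  · intro a a' hma haa' ha'i
    have hgm : max (Mreg x τ wlo whi n k (q - 1) (m - 1)) (Rlr x τ wlo whi n k m i) ≤
        max (Mreg x τ wlo whi n k (q - 1) (a' - 1)) (Rlr x τ wlo whi n k a' i) :=
      hmin a' (Finset.mem_Icc.mpr ⟨by omega, ha'i⟩)
    apply max_le
    · exact (hMmono a a' (by omega) haa' ha'i).trans (le_max_left _ _)
    · calc Rlr x τ wlo whi n k a i
          ≤ Rlr x τ wlo whi n k m i := hRmono m a hmmem.1 hma (by omega)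
        _ ≤ max (Mreg x τ wlo whi n k (q - 1) (m - 1)) (Rlr x τ wlo whi n k m i) :=
            le_max_right _ _
        _ ≤ _ := hgm
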